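/- Fix α > 0 and β > 0. Let (t_k)_{k≥1} be a strictly increasing sequence of positive integers with t₁ ≥ 1 and t_{k+1} ≥ (1+β) t_k for all k, and set α_j = α if j ∈ {t₁, t₂, …} and α_j = 0 otherwise. Then there exists a constant C > 0 such that Σ_n ≼ (C/n)·R for all n ≥ 1 (Loewner order); that is, resampling at times whose consecutive spacings grow geometrically yields the optimal convergence rate of the regularized particle filter covariance. -/

import Mathlib

open Matrix Finset
open scoped MatrixOrder

section Helpers16

variable {d : ℕ}

lemma psd_smul16 {a : ℝ} {M : Matrix (Fin d) (Fin d) ℝ} (ha : 0 ≤ a) (hM : M.PosSemidef) :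
    (a • M).PosSemidef := by
  refine ⟨?_, fun x => ?_⟩
  · unfold Matrix.IsHermitian
    rw [conjTranspose_smul, hM.1]
    simp
  · exact (hM.smul ha).2 x

lemma pd_smul16 {a : ℝ} {M : Matrix (Fin d) (Fin d) ℝ} (ha : 0 < a) (hM : M.PosDef) :
    (a • M).PosDef := by
  refine ⟨?_, fun x hx => ?_⟩
  · unfold Matrix.IsHermitian
    rw [conjTranspose_smul, hM.1]
    simp
  · exact (hM.smul ha).2 hx

lemma psd_conj16 {M F : Matrix (Fin d) (Fin d) ℝ} (hM : M.PosSemidef) (hF : F.IsHermitian) :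
    (F * M * F).PosSemidef := by
  have h := hM.mul_mul_conjTranspose_same F
  rwa [hF.eq] at h

lemma key16 {X : Matrix (Fin d) (Fin d) ℝ} (hX : X.PosDef) :
    ∃ F : Matrix (Fin d) (Fin d) ℝ,
      F.IsHermitian ∧ IsUnit F.det ∧ F * F = X⁻¹ ∧ F⁻¹ * F⁻¹ = X := by
  have hXi : X⁻¹.PosDef := hX.inv
  let F := CFC.sqrt X⁻¹
  have hFpsd : F.PosSemidef := Matrix.nonneg_iff_posSemidef.mp (CFC.sqrt_nonneg X⁻¹)
  have hFF : F * F = X⁻¹ := CFC.sqrt_mul_sqrt_self X⁻¹ (Matrix.nonneg_iff_posSemidef.mpr hXi.posSemidef)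
  have hdet : IsUnit F.det := by
    have h1 : F.det * F.det = X⁻¹.det := by rw [← det_mul, hFF]
    have h2 : X⁻¹.det ≠ 0 := ne_of_gt hXi.det_pos
    have : F.det ≠ 0 := fun h => h2 (by rw [← h1, h, mul_zero])
    exact isUnit_iff_ne_zero.mpr this
  refine ⟨F, hFpsd.1, hdet, hFF, ?_⟩
  rw [← Matrix.mul_inv_rev, hFF, Matrix.nonsing_inv_nonsing_inv]
  exact isUnit_iff_ne_zero.mpr (ne_of_gt hX.det_pos)

lemma inv_antitone16 {A B : Matrix (Fin d) (Fin d) ℝ} (hA : A.PosDef) (hB : B.PosDef)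
    (hAB : (B - A).PosSemidef) : (A⁻¹ - B⁻¹).PosSemidef := by
  obtain ⟨F, hFh, hFdet, hFF, hFiF⟩ := key16 hA
  have hFinv : Invertible F := F.invertibleOfIsUnitDet hFdet
  have hFih : F⁻¹.IsHermitian := hFh.inv
  set M := F * B * F with hM
  have hMdet : IsUnit M.det := by
    rw [hM, det_mul, det_mul]
    exact (hFdet.mul (isUnit_iff_ne_zero.mpr (ne_of_gt hB.det_pos))).mul hFdet
  have hMinvert : Invertible M := M.invertibleOfIsUnitDet hMdet
  have hMinv : M⁻¹ = F⁻¹ * B⁻¹ * F⁻¹ := by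
    rw [hM, Matrix.mul_inv_rev, Matrix.mul_inv_rev, Matrix.mul_assoc]
  have hMinvpsd : M⁻¹.PosSemidef := by
    rw [hMinv]
    exact psd_conj16 hB.inv.posSemidef hFih
  -- G = sqrt of M⁻¹
  obtain ⟨G, hGh, hGdet, hGG⟩ : ∃ G : Matrix (Fin d) (Fin d) ℝ,
      G.IsHermitian ∧ IsUnit G.det ∧ G * G = M⁻¹ := by
    refine ⟨CFC.sqrt M⁻¹, (Matrix.nonneg_iff_posSemidef.mp (CFC.sqrt_nonneg M⁻¹)).1, ?_,
      CFC.sqrt_mul_sqrt_self M⁻¹ (Matrix.nonneg_iff_posSemidef.mpr hMinvpsd)⟩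
    have h1 : (CFC.sqrt M⁻¹).det * (CFC.sqrt M⁻¹).det = M⁻¹.det := by
      rw [← det_mul, CFC.sqrt_mul_sqrt_self M⁻¹ (Matrix.nonneg_iff_posSemidef.mpr hMinvpsd)]
    have h2 : IsUnit M⁻¹.det := M.isUnit_nonsing_inv_det hMdet
    exact isUnit_of_mul_isUnit_left (h1 ▸ h2)
  have hGinv : Invertible G := G.invertibleOfIsUnitDet hGdet
  -- M - 1 = F * (B - A) * F
  have hFAF : F * A * F = 1 := by
    rw [← hFiF]
    rw [show F * (F⁻¹ * F⁻¹) * F = (F * F⁻¹) * (F⁻¹ * F) by noncomm_ring]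
    rw [Matrix.mul_inv_of_invertible, Matrix.inv_mul_of_invertible, one_mul]
  have hM1 : M - 1 = F * (B - A) * F := by
    rw [mul_sub, sub_mul, hFAF, hM]
  have hM1psd : (M - 1).PosSemidef := hM1 ▸ psd_conj16 hAB hFh
  -- 1 - M⁻¹ = G * (M - 1) * G
  have hGMG : G * M * G = 1 := by
    have : M = G⁻¹ * G⁻¹ := by
      rw [← Matrix.mul_inv_rev, hGG, Matrix.nonsing_inv_nonsing_inv]
      exact hMdet
    rw [this, show G * (G⁻¹ * G⁻¹) * G = (G * G⁻¹) * (G⁻¹ * G) by noncomm_ring,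
      Matrix.mul_inv_of_invertible, Matrix.inv_mul_of_invertible, one_mul]
  have h1M : 1 - M⁻¹ = G * (M - 1) * G := by
    rw [mul_sub, sub_mul, hGMG, mul_one, hGG]
  have h1Mpsd : (1 - M⁻¹).PosSemidef := h1M ▸ psd_conj16 hM1psd hGh
  -- A⁻¹ - B⁻¹ = F * (1 - M⁻¹) * F
  have hfin : A⁻¹ - B⁻¹ = F * (1 - M⁻¹) * F := by
    have h2 : F * M⁻¹ * F = B⁻¹ := by
      rw [hMinv, show F * (F⁻¹ * B⁻¹ * F⁻¹) * F = (F * F⁻¹) * B⁻¹ * (F⁻¹ * F) by noncomm_ring,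
        Matrix.mul_inv_of_invertible, Matrix.inv_mul_of_invertible, one_mul, mul_one]
    rw [mul_sub, sub_mul, mul_one, hFF, h2]
  exact hfin ▸ psd_conj16 h1Mpsd hFh

variable {d : ℕ}

lemma herm_le_smul_one16 {T : Matrix (Fin d) (Fin d) ℝ} (hT : T.IsHermitian) :
    ∃ c : ℝ, 0 < c ∧ (c • (1 : Matrix (Fin d) (Fin d) ℝ) - T).PosSemidef := by
  have hsum : (0:ℝ) ≤ ∑ i, |hT.eigenvalues i| := Finset.sum_nonneg fun i _ => abs_nonneg _
  refine ⟨1 + ∑ i, |hT.eigenvalues i|, by linarith, ?_⟩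
  set c : ℝ := 1 + ∑ i, |hT.eigenvalues i| with hc
  have hle : ∀ i, hT.eigenvalues i ≤ c := by
    intro i
    have h1 : |hT.eigenvalues i| ≤ ∑ j, |hT.eigenvalues j| :=
      Finset.single_le_sum (f := fun j => |hT.eigenvalues j|)
        (fun j _ => abs_nonneg _) (Finset.mem_univ i)
    have := le_abs_self (hT.eigenvalues i)
    rw [hc]; linarith
  set U := (hT.eigenvectorUnitary : Matrix (Fin d) (Fin d) ℝ) with hU
  have hUU : U * (star U) = 1 := Matrix.mem_unitaryGroup_iff.mp hT.eigenvectorUnitary.2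
  have hspec' : T = U * diagonal hT.eigenvalues * star U := by
    have := hT.spectral_theorem
    rwa [RCLike.ofReal_real_eq_id, Function.id_comp] at this
  have h1 : U * (diagonal fun _ : Fin d => c) * star U = c • 1 := by
    have h2 : (diagonal fun _ : Fin d => c) = c • (1 : Matrix (Fin d) (Fin d) ℝ) := by
      ext i j
      by_cases h : i = j <;> simp [Matrix.one_apply, h]
    rw [h2, Matrix.mul_smul, Matrix.smul_mul, mul_one, hUU]
  have hd1 : c • (1 : Matrix (Fin d) (Fin d) ℝ) - T
      = U * (diagonal ((fun _ : Fin d => c) - hT.eigenvalues)) * star U := by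
    have hds : diagonal ((fun _ : Fin d => c) - hT.eigenvalues)
        = (diagonal fun _ : Fin d => c) - diagonal hT.eigenvalues := ((diagonal_sub _ _).trans (by rfl)).symm
    rw [hds, Matrix.mul_sub, Matrix.sub_mul, h1, ← hspec']
  rw [hd1, Matrix.star_eq_conjTranspose]
  refine Matrix.PosSemidef.mul_mul_conjTranspose_same ?_ U
  refine Matrix.PosSemidef.diagonal ?_
  intro i
  simp only [Pi.sub_apply, Pi.zero_apply, sub_nonneg]
  exact hle i

lemma exists_bound16 {R S : Matrix (Fin d) (Fin d) ℝ} (hR : R.PosDef) (hS : S.PosSemidef) :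
    ∃ c : ℝ, 0 < c ∧ (c • R - S).PosSemidef := by
  obtain ⟨F, hFh, hFdet, hFF, hFiF⟩ := key16 hR
  have hFinv : Invertible F := F.invertibleOfIsUnitDet hFdet
  have hFih : F⁻¹.IsHermitian := hFh.inv
  have hT : (F * S * F).PosSemidef := psd_conj16 hS hFh
  obtain ⟨c, hc, hcT⟩ := herm_le_smul_one16 hT.1
  refine ⟨c, hc, ?_⟩
  have hkey : c • R - S = F⁻¹ * (c • (1 : Matrix (Fin d) (Fin d) ℝ) - F * S * F) * F⁻¹ := by
    have h1 : F⁻¹ * (F * S * F) * F⁻¹ = S := by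
      rw [show F⁻¹ * (F * S * F) * F⁻¹ = (F⁻¹ * F) * S * (F * F⁻¹) by noncomm_ring,
        Matrix.mul_inv_of_invertible, Matrix.inv_mul_of_invertible, one_mul, mul_one]
    have h2 : F⁻¹ * (c • (1 : Matrix (Fin d) (Fin d) ℝ)) * F⁻¹ = c • R := by
      rw [Matrix.mul_smul, mul_one, Matrix.smul_mul, hFiF]
    rw [mul_sub, sub_mul, h1, h2]
  rw [hkey]
  exact psd_conj16 hcT hFih

lemma smul_inv16 {c : ℝ} (hc : c ≠ 0) {A : Matrix (Fin d) (Fin d) ℝ} (hA : IsUnit A.det) :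
    (c • A)⁻¹ = c⁻¹ • A⁻¹ := by
  apply Matrix.inv_eq_right_inv
  rw [Matrix.smul_mul, Matrix.mul_smul, smul_smul, Matrix.mul_nonsing_inv _ hA,
    mul_inv_cancel₀ hc, one_smul]

lemma step16 {R S : Matrix (Fin d) (Fin d) ℝ} (hR : R.PosDef) (hS : S.PosDef) {c : ℝ}
    (hc : 0 < c) (hle : (c • R - S).PosSemidef) :
    (R * (R + S)⁻¹ * S).PosDef ∧ ((c / (1 + c)) • R - R * (R + S)⁻¹ * S).PosSemidef := by
  have hRS : (R + S).PosDef := hR.add hS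
  have hRdet : IsUnit R.det := isUnit_iff_ne_zero.mpr (ne_of_gt hR.det_pos)
  have hSdet : IsUnit S.det := isUnit_iff_ne_zero.mpr (ne_of_gt hS.det_pos)
  have hRSdet : IsUnit (R + S).det := isUnit_iff_ne_zero.mpr (ne_of_gt hRS.det_pos)
  -- identity: R * (R+S)⁻¹ * S = (R⁻¹ + S⁻¹)⁻¹
  have hWpd : (R⁻¹ + S⁻¹).PosDef := hR.inv.add hS.inv
  have hid : R * (R + S)⁻¹ * S = (R⁻¹ + S⁻¹)⁻¹ := by
    have h1 : R⁻¹ + S⁻¹ = S⁻¹ * (R + S) * R⁻¹ := by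
      rw [mul_add, add_mul, Matrix.mul_assoc S⁻¹ R R⁻¹, Matrix.mul_nonsing_inv _ hRdet,
        mul_one, Matrix.nonsing_inv_mul _ hSdet, one_mul, add_comm]
    rw [h1, Matrix.mul_inv_rev, Matrix.mul_inv_rev, Matrix.nonsing_inv_nonsing_inv _ hRdet,
      Matrix.nonsing_inv_nonsing_inv _ hSdet, Matrix.mul_assoc]
  have hXpd : (R * (R + S)⁻¹ * S).PosDef := by rw [hid]; exact hWpd.inv
  refine ⟨hXpd, ?_⟩
  -- P := (c/(1+c)) • R
  have hc1 : (0:ℝ) < 1 + c := by linarith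
  have hq : 0 < c / (1 + c) := div_pos hc hc1
  have hPpd : ((c / (1 + c)) • R).PosDef := pd_smul16 hq hR
  have hcRpd : (c • R).PosDef := pd_smul16 hc hR
  -- S⁻¹ - (c•R)⁻¹ PSD
  have h2 : (S⁻¹ - (c • R)⁻¹).PosSemidef := inv_antitone16 hS hcRpd hle
  -- (R⁻¹ + S⁻¹) - P⁻¹ PSD
  have hPinv : ((c / (1 + c)) • R)⁻¹ = ((1 + c) / c) • R⁻¹ := by
    rw [smul_inv16 (ne_of_gt hq) hRdet, inv_div]
  have h3 : ((R⁻¹ + S⁻¹) - ((c / (1 + c)) • R)⁻¹).PosSemidef := by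
    rw [hPinv]
    have hsplit : ((1 + c) / c) • R⁻¹ = R⁻¹ + c⁻¹ • R⁻¹ := by
      rw [show (1 + c) / c = 1 + c⁻¹ by field_simp; ring, add_smul, one_smul]
    have hcRinv : (c • R)⁻¹ = c⁻¹ • R⁻¹ := smul_inv16 (ne_of_gt hc) hRdet
    have : (R⁻¹ + S⁻¹) - ((1 + c) / c) • R⁻¹ = S⁻¹ - (c • R)⁻¹ := by
      rw [hsplit, hcRinv]; abel
    rw [this]
    exact h2
  -- invert once more
  have h4 := inv_antitone16 hPpd.inv hWpd h3
  have h5 : (R⁻¹ + S⁻¹)⁻¹ = R * (R + S)⁻¹ * S := hid.symm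
  have hPP : (((c / (1 + c)) • R)⁻¹)⁻¹ = (c / (1 + c)) • R :=
    Matrix.nonsing_inv_nonsing_inv _ (isUnit_iff_ne_zero.mpr (ne_of_gt hPpd.det_pos))
  rw [hPP, h5] at h4
  exact h4

end Helpers16

/-- Resampling at times whose consecutive spacings grow geometrically (ratio `1+β`)
yields the optimal rate: `Σ_n ≼ (C/n) R` (Loewner order) for some `C > 0`. -/
theorem stmt_16 {d : ℕ} (hd : 1 ≤ d)
    (R S0 : Matrix (Fin d) (Fin d) ℝ) (hR : R.PosDef) (hS0pd : S0.PosDef)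
    (α β : ℝ) (hα : 0 < α) (hβ : 0 < β)
    (t : ℕ → ℕ) (ht1 : 1 ≤ t 1) (htmono : ∀ k : ℕ, 1 ≤ k → t k < t (k + 1))
    (htgrow : ∀ k : ℕ, 1 ≤ k → (1 + β) * (t k : ℝ) ≤ (t (k + 1) : ℝ))
    (αseq : ℕ → ℝ)
    (hαseq₁ : ∀ j : ℕ, (∃ k : ℕ, 1 ≤ k ∧ t k = j) → αseq j = α)
    (hαseq₂ : ∀ j : ℕ, (¬∃ k : ℕ, 1 ≤ k ∧ t k = j) → αseq j = 0)
    (S : ℕ → Matrix (Fin d) (Fin d) ℝ) (hS0 : S 0 = S0)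
    (hrec : ∀ n, S (n + 1) = (1 + αseq (n + 1)) • (R * (R + S n)⁻¹ * S n)) :
    ∃ C > 0, ∀ n : ℕ, 1 ≤ n → ((C / (n : ℝ)) • R - S n).PosSemidef := by
  classical
  have hαnn : ∀ j, 0 ≤ αseq j := by
    intro j
    by_cases h : ∃ k, 1 ≤ k ∧ t k = j
    · rw [hαseq₁ j h]; exact le_of_lt hα
    · rw [hαseq₂ j h]
  have hklet : ∀ k, 1 ≤ k → k ≤ t k := by
    intro k hk
    induction k, hk using Nat.le_induction with
    | base => exact ht1
    | succ k hk ih => have := htmono k hk; omega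
  have hmono : ∀ i k, 1 ≤ i → i ≤ k → t i ≤ t k := by
    intro i k hi hik
    induction k, hik using Nat.le_induction with
    | base => exact le_rfl
    | succ k hik ih => have := htmono k (le_trans hi hik); omega
  obtain ⟨c0, hc0, hbound0⟩ := exists_bound16 hR hS0pd.posSemidef
  -- scalar recursion
  let c : ℕ → ℝ := fun n => Nat.rec c0 (fun m cm => (1 + αseq (m + 1)) * (cm / (1 + cm))) n
  have hc_succ : ∀ n, c (n + 1) = (1 + αseq (n + 1)) * (c n / (1 + c n)) := fun n => rfl
  -- invariant
  have hInv : ∀ n, 0 < c n ∧ (S n).PosDef ∧ (c n • R - S n).PosSemidef := by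
    intro n
    induction n with
    | zero => exact ⟨hc0, hS0 ▸ hS0pd, hS0 ▸ hbound0⟩
    | succ n ih =>
      obtain ⟨hcn, hSn, hle⟩ := ih
      obtain ⟨hXpd, hXle⟩ := step16 hR hSn hcn hle
      have ha : 0 ≤ αseq (n + 1) := hαnn (n + 1)
      have h1a : 0 < 1 + αseq (n + 1) := by linarith
      have hq : 0 < c n / (1 + c n) := div_pos hcn (by linarith)
      refine ⟨?_, ?_, ?_⟩
      · rw [hc_succ]; exact mul_pos h1a hq
      · rw [hrec n]; exact pd_smul16 h1a hXpd
      · rw [hrec n, hc_succ, mul_smul, ← smul_sub]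
        exact psd_smul16 (le_of_lt h1a) hXle
  -- u sequence
  let u : ℕ → ℝ := fun n => (c n)⁻¹
  have hupos : ∀ n, 0 < u n := fun n => inv_pos.mpr (hInv n).1
  have hcu : ∀ n, c n = (u n)⁻¹ := fun n => (inv_inv (c n)).symm
  have hu_succ : ∀ n, u (n + 1) = (u n + 1) / (1 + αseq (n + 1)) := by
    intro n
    have hcn := (hInv n).1
    have h1a : 0 < 1 + αseq (n + 1) := by have := hαnn (n + 1); linarith
    have h1c : 0 < 1 + c n := by linarith
    show (c (n+1))⁻¹ = ((c n)⁻¹ + 1) / (1 + αseq (n + 1))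
    rw [hc_succ n, mul_inv, inv_div, eq_div_iff (ne_of_gt h1a)]
    field_simp
  -- epsilon
  set D : ℝ := (1 + α) * (1 + β) - 1 with hD
  have hDpos : 0 < D := by nlinarith
  set ε : ℝ := β / D with hε
  have hεpos : 0 < ε := div_pos hβ hDpos
  have hεD : ε * D = β := div_mul_cancel₀ β (ne_of_gt hDpos)
  have hε1α : ε * (1 + α) < 1 := by
    rw [hε, div_mul_eq_mul_div, div_lt_one hDpos]
    nlinarith
  have hεlt1 : ε < 1 := by nlinarith [mul_pos hεpos hα]
  -- last resample time
  set Res : ℕ → Prop := fun j => ∃ k, 1 ≤ k ∧ t k = j with hResdef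
  haveI : DecidablePred Res := Classical.decPred _
  let τ : ℕ → ℕ := fun n => Nat.findGreatest Res n
  have hτle : ∀ n, τ n ≤ n := fun n => Nat.findGreatest_le n
  have hτ_res : ∀ n, Res (n + 1) → τ (n + 1) = n + 1 := fun n h => Nat.findGreatest_eq h
  have hτ_nres : ∀ n, ¬Res (n + 1) → τ (n + 1) = τ n := fun n h => Nat.findGreatest_of_not h
  have hτ0 : τ 0 = 0 := Nat.findGreatest_zero
  have hτ_b1 : ∀ n, t 1 = n + 1 → τ n = 0 := by
    intro n h1
    by_contra hne
    have hspec : Res (τ n) := Nat.findGreatest_of_ne_zero rfl hne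
    obtain ⟨j, hj1, hjt⟩ := hspec
    have h2 : t 1 ≤ t j := hmono 1 j le_rfl hj1
    have h3 : τ n ≤ n := hτle n
    omega
  have hτ_b2 : ∀ n k, 2 ≤ k → t k = n + 1 → τ n = t (k - 1) := by
    intro n k hk htk
    have hk1 : 1 ≤ k - 1 := by omega
    have hlt : t (k - 1) < t k := by
      have := htmono (k - 1) hk1
      rwa [Nat.sub_add_cancel (by omega)] at this
    have hle1 : t (k - 1) ≤ n := by omega
    have hge : t (k - 1) ≤ τ n := Nat.le_findGreatest hle1 ⟨k - 1, hk1, rfl⟩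
    rcases Nat.lt_or_ge (t (k - 1)) (τ n) with hlt2 | hge2
    · exfalso
      have hspec : Res (τ n) := Nat.findGreatest_of_ne_zero rfl (by omega)
      obtain ⟨j, hj1, hjt⟩ := hspec
      have h3 : τ n ≤ n := hτle n
      rcases (by omega : j ≤ k - 1 ∨ k ≤ j) with h | h
      · have := hmono j (k - 1) hj1 h; omega
      · have := hmono k j (by omega) h; omega
    · omega
  -- main scalar invariant
  have hInv2 : ∀ n : ℕ, 1 ≤ n → ((n : ℝ) - (τ n : ℝ)) + ε * (τ n : ℝ) ≤ u n := by
    intro n hn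
    induction n, hn using Nat.le_induction with
    | base =>
      by_cases h : Res 1
      · have hτ1 : τ 1 = 1 := hτ_res 0 h
        have ha : αseq 1 = α := hαseq₁ 1 h
        have hus : u 1 = (u 0 + 1) / (1 + α) := by
          have := hu_succ 0
          rwa [ha] at this
        rw [hτ1, hus]
        push_cast
        rw [le_div_iff₀ (by linarith : (0:ℝ) < 1 + α)]
        nlinarith [hupos 0]
      · have hτ1 : τ 1 = 0 := by
          have := hτ_nres 0 h
          rwa [hτ0] at this
        have ha : αseq 1 = 0 := hαseq₂ 1 h
        have hus : u 1 = u 0 + 1 := by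
          have := hu_succ 0
          rw [ha] at this
          simpa using this
        rw [hτ1, hus]
        push_cast
        nlinarith [hupos 0]
    | succ n hn ih =>
      by_cases h : Res (n + 1)
      · have hτ1 : τ (n + 1) = n + 1 := hτ_res n h
        have ha : αseq (n + 1) = α := hαseq₁ _ h
        have hus : u (n + 1) = (u n + 1) / (1 + α) := by rw [hu_succ n, ha]
        obtain ⟨k, hk1, htk⟩ := h
        rcases eq_or_lt_of_le hk1 with hk | hk
        · -- k = 1
          have ht1n : t 1 = n + 1 := by rw [← hk] at htk; exact htk
          have hτn : τ n = 0 := hτ_b1 n ht1n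
          rw [hτn] at ih
          push_cast at ih
          rw [hτ1, hus]
          push_cast
          rw [le_div_iff₀ (by linarith : (0:ℝ) < 1 + α)]
          nlinarith [hupos n, (show (0:ℝ) ≤ (n:ℝ) + 1 by positivity)]
        · -- k ≥ 2
          have hk2 : 2 ≤ k := hk
          have hτn : τ n = t (k - 1) := hτ_b2 n k hk2 htk
          have hgrow := htgrow (k - 1) (by omega)
          rw [Nat.sub_add_cancel (by omega)] at hgrow
          have hm1 : 1 ≤ t (k - 1) := by
            have := hklet (k - 1) (by omega)
            omega
          have htkc : (t k : ℝ) = (n : ℝ) + 1 := by exact_mod_cast congrArg (Nat.cast (R := ℝ)) htk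
          have hT1 : (1:ℝ) ≤ (t (k - 1) : ℝ) := by exact_mod_cast hm1
          have hgrow' : (1 + β) * (t (k - 1) : ℝ) ≤ (n : ℝ) + 1 := by
            rw [← htkc]; exact hgrow
          rw [hτn] at ih
          rw [hτ1, hus]
          push_cast
          push_cast at ih
          rw [le_div_iff₀ (by linarith : (0:ℝ) < 1 + α)]
          have hD0 : ((1 + α) * (1 + β) - 1 : ℝ) ≠ 0 := by rw [← hD]; exact ne_of_gt hDpos
          have expand : ((n:ℝ) + 1) - (t (k-1) : ℝ) + ε * (t (k-1) : ℝ) - ε * ((n:ℝ) + 1) * (1 + α)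
              = (α * (((n:ℝ) + 1) - (1 + β) * (t (k-1) : ℝ))) / D := by
            rw [hε, hD]
            field_simp
            ring
          have hnn : 0 ≤ (α * (((n:ℝ) + 1) - (1 + β) * (t (k-1) : ℝ))) / D :=
            div_nonneg (mul_nonneg (le_of_lt hα) (by linarith)) (le_of_lt hDpos)
          linarith [expand, hnn, ih]
      · have hτ1 : τ (n + 1) = τ n := hτ_nres n h
        have ha : αseq (n + 1) = 0 := hαseq₂ _ h
        have hus : u (n + 1) = u n + 1 := by
          rw [hu_succ n, ha]
          simp
        rw [hτ1, hus]
        push_cast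
        linarith
  -- conclusion
  refine ⟨1 / ε, one_div_pos.mpr hεpos, ?_⟩
  intro n hn
  have hτn : (τ n : ℝ) ≤ (n : ℝ) := by exact_mod_cast hτle n
  have hun : ε * (n : ℝ) ≤ u n := by
    have h2 := hInv2 n hn
    have h4 : 0 ≤ (1 - ε) * ((n : ℝ) - (τ n : ℝ)) :=
      mul_nonneg (by linarith) (by linarith)
    nlinarith [h2, h4]
  have hnpos : (0:ℝ) < (n : ℝ) := by
    have : 0 < n := hn
    exact_mod_cast this
  obtain ⟨hcpos, _, hle⟩ := hInv n
  have hcn : c n ≤ (1 / ε) / (n : ℝ) := by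
    rw [hcu n]
    have hεn : 0 < ε * (n : ℝ) := mul_pos hεpos hnpos
    have h3 : (u n)⁻¹ ≤ (ε * (n : ℝ))⁻¹ := by
      apply inv_anti₀ hεn hun
    calc (u n)⁻¹ ≤ (ε * (n : ℝ))⁻¹ := h3
      _ = (1 / ε) / (n : ℝ) := by field_simp
  have hfin : ((1 / ε) / (n : ℝ)) • R - S n
      = (c n • R - S n) + (((1 / ε) / (n : ℝ) - c n) • R) := by
    rw [sub_smul]
    abel
  rw [hfin]
  exact hle.add (psd_smul16 (by linarith) hR.posSemidef)
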